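/- If τ is a noetherian topology on a set Y, then the point closure τ' of τ (the coarsest topology in which points and τ-closed sets are closed) is also a noetherian topology. -/
import Mathlib


/-- If τ is a noetherian topology on a set Y, then the point closure τ'
of τ (the coarsest topology in which points and τ-closed sets are closed) is also a
noetherian topology.  The point closure is the topology generated by the τ-open sets
together with the complements of singletons. -/
theorem stmt1 {Y : Type*} [t : TopologicalSpace Y] [TopologicalSpace.NoetherianSpace Y] :
    @TopologicalSpace.NoetherianSpace Y
      (TopologicalSpace.generateFrom ({U : Set Y | IsOpen U} ∪ {V : Set Y | ∃ y : Y, V = {y}ᶜ})) := by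
  classical
  set S : Set (Set Y) := {U : Set Y | IsOpen U} ∪ {V : Set Y | ∃ y : Y, V = {y}ᶜ} with hS
  -- Every t'-open set is a τ-open set minus a finite set.
  have hA : ∀ U : Set Y, TopologicalSpace.GenerateOpen S U →
      ∃ V F : Set Y, IsOpen V ∧ F.Finite ∧ U = V \ F := by
    intro U hU
    induction hU with
    | basic U hU =>
      rcases hU with h | ⟨y, rfl⟩
      · exact ⟨U, ∅, h, Set.finite_empty, by simp⟩
      · exact ⟨Set.univ, {y}, isOpen_univ, Set.finite_singleton y,
          (Set.compl_eq_univ_diff _)⟩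
    | univ => exact ⟨Set.univ, ∅, isOpen_univ, Set.finite_empty, by simp⟩
    | inter U₁ U₂ _ _ ih₁ ih₂ =>
      obtain ⟨V₁, F₁, hV₁, hF₁, rfl⟩ := ih₁
      obtain ⟨V₂, F₂, hV₂, hF₂, rfl⟩ := ih₂
      refine ⟨V₁ ∩ V₂, F₁ ∪ F₂, hV₁.inter hV₂, hF₁.union hF₂, ?_⟩
      ext x; simp only [Set.mem_inter_iff, Set.mem_diff, Set.mem_union]; tauto
    | sUnion K _ ih =>
      choose! V F hV hF hEq using ih
      -- W is the union of the V's
      set W : Set Y := ⋃ U ∈ K, V U with hW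
      have hWopen : IsOpen W := isOpen_biUnion fun U hU => hV U hU
      have hsub : ⋃₀ K ⊆ W := by
        rintro x ⟨U, hU, hx⟩
        exact Set.mem_biUnion hU (by rw [hEq U hU] at hx; exact hx.1)
      -- W is τ-compact, so finitely many V's cover it
      obtain ⟨T, hT⟩ := (TopologicalSpace.NoetherianSpace.isCompact W).elim_finite_subcover
        (fun U : K => V U) (fun U => hV U U.2)
        (by rintro x hx
            obtain ⟨U, hU, hxU⟩ := Set.mem_iUnion₂.mp hx
            exact Set.mem_iUnion.mpr ⟨⟨U, hU⟩, hxU⟩)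
      refine ⟨W, W \ ⋃₀ K, hWopen, ?_, (Set.diff_diff_cancel_left hsub).symm⟩
      have hsub2 : W \ ⋃₀ K ⊆ ⋃ U ∈ T, F U := by
        intro x hx
        obtain ⟨U, hUT, hxV⟩ := Set.mem_iUnion₂.mp (hT hx.1)
        have hxU : x ∉ (U : Set Y) := fun h => hx.2 ⟨U, U.2, h⟩
        rw [hEq U U.2] at hxU
        refine Set.mem_biUnion hUT ?_
        by_contra hxF
        exact hxU ⟨hxV, hxF⟩
      exact (T.finite_toSet.biUnion fun U _ => hF U U.2).subset hsub2
  -- Now show every set is t'-compact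
  refine (@TopologicalSpace.noetherianSpace_iff_isCompact Y (TopologicalSpace.generateFrom S)).mpr fun s => ?_
  refine @isCompact_of_finite_subcover Y (TopologicalSpace.generateFrom S) s fun {ι} U hUo hs => ?_
  choose V F hV hF hEq using fun i => hA (U i) (hUo i)
  have hsV : s ⊆ ⋃ i, V i := by
    intro x hx
    obtain ⟨i, hi⟩ := Set.mem_iUnion.mp (hs hx)
    rw [hEq i] at hi
    exact Set.mem_iUnion.mpr ⟨i, hi.1⟩
  obtain ⟨T₁, hT₁⟩ := (TopologicalSpace.NoetherianSpace.isCompact s).elim_finite_subcover V hV hsV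
  -- the leftover is finite
  have hLfin : (s \ ⋃ i ∈ T₁, U i).Finite := by
    refine (T₁.finite_toSet.biUnion fun i _ => hF i).subset ?_
    intro x hx
    obtain ⟨i, hiT, hxV⟩ := Set.mem_iUnion₂.mp (hT₁ hx.1)
    have hxU : x ∉ U i := fun h => hx.2 (Set.mem_biUnion hiT h)
    rw [hEq i] at hxU
    refine Set.mem_biUnion hiT ?_
    by_contra hxF
    exact hxU ⟨hxV, hxF⟩
  -- a finite set is compact in any topology, cover it by finitely many U's
  obtain ⟨T₂, hT₂⟩ := @IsCompact.elim_finite_subcover Y (TopologicalSpace.generateFrom S) _ ι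
    (@Set.Finite.isCompact Y (TopologicalSpace.generateFrom S) _ hLfin) U hUo
    (fun x hx => hs hx.1)
  refine ⟨T₁ ∪ T₂, fun x hx => ?_⟩
  by_cases h : x ∈ ⋃ i ∈ T₁, U i
  · obtain ⟨i, hi, hxi⟩ := Set.mem_iUnion₂.mp h
    exact Set.mem_biUnion (Finset.mem_union_left _ hi) hxi
  · obtain ⟨i, hi, hxi⟩ := Set.mem_iUnion₂.mp (hT₂ ⟨hx, h⟩)
    exact Set.mem_biUnion (Finset.mem_union_right _ hi) hxi
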